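/- Let Ŝ be a uniform sampling of [n] (meaning Prob(i ∈ Ŝ) is the same for all i) with |Ŝ| = τ almost surely, τ ≥ 1. Then λ(P(Ŝ)) = τ²/n. -/

import Mathlib

open Finset Matrix BigOperators

noncomputable def probMatrix {n : ℕ} {Ω : Type*} [Fintype Ω]
    (w : Ω → ℝ) (Shat : Ω → Finset (Fin n)) : Matrix (Fin n) (Fin n) ℝ :=
  fun i j => ∑ ω, if i ∈ Shat ω ∧ j ∈ Shat ω then w ω else 0

/-- Largest eigenvalue of a symmetric matrix: `λ(M) = sup { hᵀ M h : hᵀ h ≤ 1 }`. -/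
noncomputable def lambdaMax {n : ℕ} (M : Matrix (Fin n) (Fin n) ℝ) : ℝ :=
  sSup {r : ℝ | ∃ h : Fin n → ℝ, h ⬝ᵥ h ≤ 1 ∧ r = h ⬝ᵥ M.mulVec h}

lemma quadform {n : ℕ} {Ω : Type*} [Fintype Ω]
    (w : Ω → ℝ) (Shat : Ω → Finset (Fin n)) (h : Fin n → ℝ) :
    h ⬝ᵥ (probMatrix w Shat).mulVec h = ∑ ω, w ω * (∑ i ∈ Shat ω, h i) ^ 2 := by
  simp only [dotProduct, Matrix.mulVec, probMatrix, Finset.sum_mul, Finset.mul_sum]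
  calc ∑ x : Fin n, ∑ y : Fin n, ∑ ω : Ω,
        h x * ((if x ∈ Shat ω ∧ y ∈ Shat ω then w ω else 0) * h y)
      = ∑ x : Fin n, ∑ ω : Ω, ∑ y : Fin n,
        h x * ((if x ∈ Shat ω ∧ y ∈ Shat ω then w ω else 0) * h y) :=
        Finset.sum_congr rfl fun x _ => Finset.sum_comm
    _ = ∑ ω : Ω, ∑ x : Fin n, ∑ y : Fin n,
        h x * ((if x ∈ Shat ω ∧ y ∈ Shat ω then w ω else 0) * h y) := Finset.sum_comm
    _ = ∑ ω, w ω * (∑ i ∈ Shat ω, h i) ^ 2 := by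
        apply Finset.sum_congr rfl
        intro ω _
        have key : ∀ x y : Fin n, h x * ((if x ∈ Shat ω ∧ y ∈ Shat ω then w ω else 0) * h y)
            = w ω * ((if x ∈ Shat ω then h x else 0) * (if y ∈ Shat ω then h y else 0)) := by
          intro x y; by_cases hx : x ∈ Shat ω <;> by_cases hy : y ∈ Shat ω <;>
            simp only [hx, hy, and_true, and_false, if_true, if_false, true_and,
              mul_zero, zero_mul, ite_self] <;> ring
        simp only [key, ← Finset.mul_sum, ← Finset.sum_mul]
        rw [Finset.sum_ite_mem, Finset.univ_inter, sq]

theorem lambdaMax_uniform_fixed_card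
    {n : ℕ} {Ω : Type*} [Fintype Ω]
    (w : Ω → ℝ) (hw0 : ∀ ω, 0 ≤ w ω) (hw1 : ∑ ω, w ω = 1)
    (Shat : Ω → Finset (Fin n)) (τ : ℕ) (hτ : 1 ≤ τ)
    (hcard : ∀ ω, w ω ≠ 0 → (Shat ω).card = τ)
    (huniform : ∀ i j : Fin n,
      (∑ ω, if i ∈ Shat ω then w ω else 0) = ∑ ω, if j ∈ Shat ω then w ω else 0) :
    lambdaMax (probMatrix w Shat) = (τ : ℝ) ^ 2 / n := by
  -- there is an outcome with positive weight
  obtain ⟨ω₀, hω₀⟩ : ∃ ω, w ω ≠ 0 := by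
    by_contra hc
    push_neg at hc
    simp [hc] at hw1
  -- n is positive
  have hn : 0 < n := by
    have h1 : (Shat ω₀).Nonempty := by
      rw [← Finset.card_pos, hcard ω₀ hω₀]; omega
    obtain ⟨i, _⟩ := h1
    exact i.pos
  have hn' : (0:ℝ) < n := by exact_mod_cast hn
  -- marginal probabilities are all τ/n
  have hmarg : ∀ i : Fin n, (∑ ω, if i ∈ Shat ω then w ω else 0) = τ / n := by
    intro i
    have htot : ∑ j : Fin n, (∑ ω, if j ∈ Shat ω then w ω else 0) = τ := by
      rw [Finset.sum_comm]
      have : ∀ ω : Ω, (∑ j : Fin n, if j ∈ Shat ω then w ω else 0) = w ω * τ := by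
        intro ω
        rw [Finset.sum_ite_mem, Finset.univ_inter, Finset.sum_const, nsmul_eq_mul]
        rcases eq_or_ne (w ω) 0 with h0 | h0
        · simp [h0]
        · rw [hcard ω h0]; ring
      rw [Finset.sum_congr rfl fun ω _ => this ω, ← Finset.sum_mul, hw1, one_mul]
    have hall : ∀ j : Fin n, (∑ ω, if j ∈ Shat ω then w ω else 0)
        = (∑ ω, if i ∈ Shat ω then w ω else 0) := fun j => huniform j i
    rw [Finset.sum_congr rfl fun j _ => hall j, Finset.sum_const, Finset.card_univ,
      Fintype.card_fin, nsmul_eq_mul] at htot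
    field_simp
    linarith [htot]
  -- upper bound for the quadratic form
  have hub : ∀ h : Fin n → ℝ, h ⬝ᵥ h ≤ 1 →
      h ⬝ᵥ (probMatrix w Shat).mulVec h ≤ (τ:ℝ)^2 / n := by
    intro h hh
    rw [quadform]
    have step1 : ∑ ω, w ω * (∑ i ∈ Shat ω, h i) ^ 2
        ≤ ∑ ω, w ω * ((τ:ℝ) * ∑ i ∈ Shat ω, (h i)^2) := by
      apply Finset.sum_le_sum
      intro ω _
      rcases eq_or_ne (w ω) 0 with h0 | h0
      · simp [h0]
      · apply mul_le_mul_of_nonneg_left _ (hw0 ω)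
        have := sq_sum_le_card_mul_sum_sq (s := Shat ω) (f := h)
        rwa [hcard ω h0] at this
    have step2 : ∑ ω, w ω * ((τ:ℝ) * ∑ i ∈ Shat ω, (h i)^2)
        = ∑ i : Fin n, (τ:ℝ) * ((h i)^2 * ∑ ω, if i ∈ Shat ω then w ω else 0) := by
      calc ∑ ω, w ω * ((τ:ℝ) * ∑ i ∈ Shat ω, (h i)^2)
          = ∑ ω, ∑ i : Fin n, (if i ∈ Shat ω then (τ:ℝ) * ((h i)^2 * w ω) else 0) := by
            apply Finset.sum_congr rfl; intro ω _
            rw [Finset.sum_ite_mem, Finset.univ_inter, Finset.mul_sum, Finset.mul_sum]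
            exact Finset.sum_congr rfl fun i _ => by ring
        _ = ∑ i : Fin n, ∑ ω, (if i ∈ Shat ω then (τ:ℝ) * ((h i)^2 * w ω) else 0) :=
            Finset.sum_comm
        _ = ∑ i : Fin n, (τ:ℝ) * ((h i)^2 * ∑ ω, if i ∈ Shat ω then w ω else 0) := by
            apply Finset.sum_congr rfl; intro i _
            rw [Finset.mul_sum, Finset.mul_sum]
            exact Finset.sum_congr rfl fun ω _ => by
              by_cases hi : i ∈ Shat ω <;> simp [hi]
    have hdot : ∑ i : Fin n, (h i)^2 ≤ 1 := by simpa [dotProduct, sq] using hh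
    calc ∑ ω, w ω * (∑ i ∈ Shat ω, h i) ^ 2
        ≤ ∑ ω, w ω * ((τ:ℝ) * ∑ i ∈ Shat ω, (h i)^2) := step1
      _ = ∑ i : Fin n, (τ:ℝ) * ((h i)^2 * ∑ ω, if i ∈ Shat ω then w ω else 0) := step2
      _ = ((τ:ℝ)^2 / n) * ∑ i : Fin n, (h i)^2 := by
          simp only [hmarg]
          rw [Finset.mul_sum]
          exact Finset.sum_congr rfl fun i _ => by ring
      _ ≤ ((τ:ℝ)^2 / n) * 1 := by
          apply mul_le_mul_of_nonneg_left hdot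
          positivity
      _ = (τ:ℝ)^2 / n := mul_one _
  -- the witness vector h = 1/√n
  set h0 : Fin n → ℝ := fun _ => 1 / Real.sqrt n with hh0
  have hsq : Real.sqrt n * Real.sqrt n = n := Real.mul_self_sqrt (le_of_lt hn')
  have hdot0 : h0 ⬝ᵥ h0 = 1 := by
    simp only [dotProduct, hh0, Finset.sum_const, Finset.card_univ, Fintype.card_fin,
      nsmul_eq_mul]
    field_simp
    rw [sq, hsq]
  have hval : h0 ⬝ᵥ (probMatrix w Shat).mulVec h0 = (τ:ℝ)^2 / n := by
    rw [quadform]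
    have : ∀ ω : Ω, w ω * (∑ i ∈ Shat ω, h0 i) ^ 2 = w ω * ((τ:ℝ)^2 / n) := by
      intro ω
      rcases eq_or_ne (w ω) 0 with h0' | h0'
      · simp [h0']
      · rw [Finset.sum_const, hcard ω h0', nsmul_eq_mul]
        congr 1
        rw [mul_pow, div_pow, one_pow, sq (Real.sqrt n), hsq, mul_one_div]
    rw [Finset.sum_congr rfl fun ω _ => this ω, ← Finset.sum_mul, hw1, one_mul]
  have hmem : (τ:ℝ)^2 / n ∈
      {r : ℝ | ∃ h : Fin n → ℝ, h ⬝ᵥ h ≤ 1 ∧ r = h ⬝ᵥ (probMatrix w Shat).mulVec h} :=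
    ⟨h0, le_of_eq hdot0, hval.symm⟩
  unfold lambdaMax
  apply le_antisymm
  · apply csSup_le ⟨_, hmem⟩
    rintro r ⟨h, h1, rfl⟩
    exact hub h h1
  · apply le_csSup ⟨(τ:ℝ)^2 / n, _⟩ hmem
    rintro r ⟨h, h1, rfl⟩
    exact hub h h1
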